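/- Let k be a field of characteristic 0 and let K be a finitely generated field extension of k of transcendence degree d, such that k is relatively algebraically closed in K. Then there exists a rational plurifibration of K over k, i.e. a chain of intermediate fields K = K_0 ⊇ K_1 ⊇ ⋯ ⊇ K_d = k such that for each i the extension K_i / K_{i+1} has transcendence degree 1 and K_{i+1} is relatively algebraically closed in K_i; moreover each K_i is finitely generated over k. -/

import Mathlib

open Polynomial IntermediateField

section Aux

variable {K : Type*} [Field K]

/-- Transfer algebraicity along a compatible ring hom of coefficient fields. -/
theorem aux_up {A B : Type*} [Field A] [Field B] [Algebra A K] [Algebra B K]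
    (f : A →+* B) (hf : ∀ a, algebraMap B K (f a) = algebraMap A K a)
    {x : K} (h : IsAlgebraic A x) : IsAlgebraic B x := by
  obtain ⟨p, hp0, hpx⟩ := h
  refine ⟨p.map f, fun hq => hp0 (Polynomial.map_injective f f.injective (by simpa using hq)), ?_⟩
  rw [Polynomial.aeval_def, Polynomial.eval₂_map,
    show (algebraMap B K).comp f = algebraMap A K from RingHom.ext hf, ← Polynomial.aeval_def]
  exact hpx

/-- The inclusion ring hom between the subtypes of two intermediate fields (possibly
over different base fields) when one is contained in the other as a set. -/
def auxIncl {kA kB : Type*} [Field kA] [Field kB] [Algebra kA K] [Algebra kB K]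
    (A : IntermediateField kA K) (B : IntermediateField kB K) (h : ∀ x ∈ A, x ∈ B) :
    ↥A →+* ↥B where
  toFun a := ⟨a.1, h a.1 a.2⟩
  map_one' := rfl
  map_mul' _ _ := rfl
  map_zero' := rfl
  map_add' _ _ := rfl

theorem aux_map {kA kB : Type*} [Field kA] [Field kB] [Algebra kA K] [Algebra kB K]
    (A : IntermediateField kA K) (B : IntermediateField kB K) (h : ∀ x ∈ A, x ∈ B)
    {x : K} (hx : IsAlgebraic (↥A) x) : IsAlgebraic (↥B) x :=
  aux_up (K := K) (auxIncl A B h) (fun _ => rfl) hx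

/-- Transitivity of algebraicity, elementwise. -/
theorem aux_tr {A M : Type*} [Field A] [Field M] [Algebra A K] [Algebra M K]
    (g : A →+* M) (hg : ∀ a, algebraMap M K (g a) = algebraMap A K a)
    (hM : ∀ y : M, IsAlgebraic A (algebraMap M K y))
    {x : K} (hx : IsAlgebraic M x) : IsAlgebraic A x := by
  letI : Algebra A M := g.toAlgebra
  haveI : IsScalarTower A M K := IsScalarTower.of_algebraMap_eq fun a => (hg a).symm
  haveI : Algebra.IsIntegral A M := ⟨fun y =>
    (isIntegral_algebraMap_iff (algebraMap M K).injective).mp (hM y).isIntegral⟩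
  exact (isIntegral_trans x hx.isIntegral).isAlgebraic

theorem aux_tr' {kA kB : Type*} [Field kA] [Field kB] [Algebra kA K] [Algebra kB K]
    (A : IntermediateField kA K) (B : IntermediateField kB K)
    (hAB : ∀ x ∈ A, x ∈ B) (hB : ∀ y ∈ B, IsAlgebraic (↥A) y)
    {x : K} (hx : IsAlgebraic (↥B) x) : IsAlgebraic (↥A) x :=
  aux_tr (K := K) (auxIncl A B hAB) (fun _ => rfl) (fun y => hB y.1 y.2) hx

theorem aux_mem_isAlg {kA : Type*} [Field kA] [Algebra kA K] (A : IntermediateField kA K)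
    {x : K} (hx : x ∈ A) : IsAlgebraic (↥A) x :=
  isAlgebraic_algebraMap (⟨x, hx⟩ : ↥A)

/-- Setup: the intermediate field generated by a set is a fraction field of the
subalgebra generated by the same set. -/
theorem aux_frac {F : Type*} [Field F] [Algebra F K] (S : Set K)
    {P : Prop}
    (hP : ∀ (_ : Algebra (↥(Algebra.adjoin F S)) (↥(IntermediateField.adjoin F S)))
      (_ : IsScalarTower (↥(Algebra.adjoin F S)) (↥(IntermediateField.adjoin F S)) K)
      (_ : IsFractionRing (↥(Algebra.adjoin F S)) (↥(IntermediateField.adjoin F S))), P) :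
    P := by
  have hsub : ∀ x ∈ Algebra.adjoin F S, x ∈ IntermediateField.adjoin F S := fun x hx =>
    IntermediateField.algebra_adjoin_le_adjoin F S hx
  letI : Algebra (↥(Algebra.adjoin F S)) (↥(IntermediateField.adjoin F S)) :=
    RingHom.toAlgebra
      { toFun := fun a => ⟨a.1, hsub a.1 a.2⟩
        map_one' := rfl
        map_mul' := fun _ _ => rfl
        map_zero' := rfl
        map_add' := fun _ _ => rfl }
  haveI : IsScalarTower (↥(Algebra.adjoin F S)) (↥(IntermediateField.adjoin F S)) K :=
    IsScalarTower.of_algebraMap_eq fun _ => rfl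
  have hrange : Algebra.adjoin F S =
      (MvPolynomial.aeval (Subtype.val : S → K) : MvPolynomial S F →ₐ[F] K).range := by
    rw [← Algebra.adjoin_range_eq_range_aeval, Subtype.range_coe]
  haveI : IsFractionRing (↥(Algebra.adjoin F S)) (↥(IntermediateField.adjoin F S)) :=
    { map_units := by
        rintro ⟨y, hy⟩
        have hy0 : y ≠ 0 := mem_nonZeroDivisors_iff_ne_zero.mp hy
        rw [isUnit_iff_ne_zero]
        intro h0
        apply hy0
        have h1 : ((algebraMap (↥(Algebra.adjoin F S)) (↥(IntermediateField.adjoin F S)) y :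
            ↥(IntermediateField.adjoin F S)) : K) = 0 := by rw [h0]; rfl
        exact Subtype.ext h1
      surj := by
        rintro ⟨z, hz⟩
        rw [IntermediateField.mem_adjoin_iff] at hz
        obtain ⟨r, s, hrs⟩ := hz
        have ha : MvPolynomial.aeval (Subtype.val : S → K) r ∈ Algebra.adjoin F S := by
          rw [hrange]; exact ⟨r, rfl⟩
        have hc : MvPolynomial.aeval (Subtype.val : S → K) s ∈ Algebra.adjoin F S := by
          rw [hrange]; exact ⟨s, rfl⟩
        by_cases hc0 : MvPolynomial.aeval (Subtype.val : S → K) s = 0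
        · refine ⟨⟨0, 1⟩, ?_⟩
          have hz0 : z = 0 := by rw [hrs, hc0, div_zero]
          apply Subtype.ext
          show z * _ = _
          simp [hz0]
        · refine ⟨⟨⟨_, ha⟩, ⟨⟨_, hc⟩, mem_nonZeroDivisors_of_ne_zero
            (fun h => hc0 (congrArg Subtype.val h))⟩⟩, ?_⟩
          apply Subtype.ext
          show z * MvPolynomial.aeval (Subtype.val : S → K) s =
            MvPolynomial.aeval (Subtype.val : S → K) r
          rw [hrs, div_mul_cancel₀ _ hc0]
      exists_of_eq := by
        intro x y h
        refine ⟨1, ?_⟩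
        have h1 := congrArg (Subtype.val : ↥(IntermediateField.adjoin F S) → K) h
        rw [show x = y from Subtype.ext h1] }
  exact hP inferInstance inferInstance inferInstance

theorem aux_frac_trans {F : Type*} [Field F] [Algebra F K] (S : Set K) (x : K)
    (hx : Transcendental (↥(Algebra.adjoin F S)) x) :
    Transcendental (↥(IntermediateField.adjoin F S)) x := by
  refine aux_frac (F := F) (K := K) S fun alg tower frac => ?_
  letI := alg
  haveI := tower
  haveI := frac
  intro halg
  exact hx ((IsFractionRing.isAlgebraic_iff (↥(Algebra.adjoin F S))
    (↥(IntermediateField.adjoin F S)) K).mpr halg)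

theorem aux_frac_li {F : Type*} [Field F] [Algebra F K] (S : Set K)
    {ι : Type*} (v : ι → K) (hv : LinearIndependent (↥(Algebra.adjoin F S)) v) :
    LinearIndependent (↥(IntermediateField.adjoin F S)) v := by
  refine aux_frac (F := F) (K := K) S fun alg tower frac => ?_
  letI := alg
  haveI := tower
  haveI := frac
  exact hv.localization (↥(IntermediateField.adjoin F S))
    (nonZeroDivisors (↥(Algebra.adjoin F S)))

/-- Linear independence over a base field is preserved when extending scalars to the
polynomial ring in an element transcendental over a field containing the vectors. -/
theorem aux_step1 {F : Type*} [Field F] [Algebra F K] (t : K)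
    (L : IntermediateField F K) (ht : Transcendental (↥L) t)
    {ι : Type*} (v : ι → K) (hv : ∀ m, v m ∈ L)
    (hli : LinearIndependent F v) :
    LinearIndependent (↥(Algebra.adjoin F ({t} : Set K))) v := by
  rw [linearIndependent_iff'] at hli ⊢
  intro s g hsum m hm
  have hrep : ∀ m, ∃ p : F[X], Polynomial.aeval t p = (g m : K) := by
    intro m
    have h2 : (g m : K) ∈ (Polynomial.aeval t : F[X] →ₐ[F] K).range := by
      rw [← Algebra.adjoin_singleton_eq_range_aeval]
      exact (g m).2
    exact h2
  choose f hf using hrep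
  set q : Polynomial (↥L) :=
    ∑ m ∈ s, (f m).map (algebraMap F ↥L) * Polynomial.C (⟨v m, hv m⟩ : ↥L) with hq
  have hsum' : ∑ m ∈ s, (g m : K) * v m = 0 := by
    simpa [Algebra.smul_def] using hsum
  have hqeval : Polynomial.aeval t q = (0 : K) := by
    rw [hq, map_sum]
    have hterm : ∀ m ∈ s, Polynomial.aeval t ((f m).map (algebraMap F ↥L) *
        Polynomial.C (⟨v m, hv m⟩ : ↥L)) = (g m : K) * v m := by
      intro m _
      rw [map_mul, Polynomial.aeval_C, Polynomial.aeval_map_algebraMap, hf m]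
      rfl
    rw [Finset.sum_congr rfl hterm, hsum']
  have hq0 : q = 0 := (transcendental_iff.mp ht) q hqeval
  have hcoeff : ∀ (j : ℕ) (m' : ι), m' ∈ s → (f m').coeff j = 0 := by
    intro j
    have h0 : q.coeff j = 0 := by rw [hq0]; simp
    rw [hq, Polynomial.finset_sum_coeff] at h0
    simp_rw [Polynomial.coeff_mul_C, Polynomial.coeff_map] at h0
    have h1 : ∑ m' ∈ s, ((f m').coeff j) • v m' = 0 := by
      have h2 := congrArg (Subtype.val : ↥L → K) h0
      simp only [AddSubmonoidClass.coe_finset_sum, MulMemClass.coe_mul,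
        ZeroMemClass.coe_zero] at h2
      rw [← h2]
      refine Finset.sum_congr rfl fun m' _ => ?_
      rw [Algebra.smul_def, IsScalarTower.algebraMap_apply F (↥L) K]
      rfl
    exact fun m' hm' => hli s (fun m'' => (f m'').coeff j) h1 m' hm'
  have hfm : f m = 0 := Polynomial.ext fun j => hcoeff j m hm
  apply Subtype.ext
  show (g m : K) = 0
  rw [← hf m, hfm, map_zero]

end Aux

set_option maxHeartbeats 1600000 in
/-- Let `k` be a field of characteristic 0 and `K` a finitely
generated field extension of `k` of transcendence degree `d`, with `k`
relatively algebraically closed in `K`.  Then there is a rational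
plurifibration of `K` over `k`: a chain of intermediate fields
`K = K₀ ⊇ K₁ ⊇ ⋯ ⊇ K_d = k` such that each step `K_i / K_{i+1}` has
transcendence degree 1 (i.e. there is `t ∈ K_i` transcendental over `K_{i+1}`
with `K_i` algebraic over `K_{i+1}(t)`), each `K_{i+1}` is relatively
algebraically closed in `K_i`, and each `K_i` is finitely generated over `k`. -/
theorem plurifibration_exists
    (k K : Type*) [Field k] [Field K] [Algebra k K] [CharZero k]
    (d : ℕ)
    (hfg : (⊤ : IntermediateField k K).FG)
    (htd : ∃ b : Fin d → K, IsTranscendenceBasis k b)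
    (hrac : ∀ x : K, IsAlgebraic k x → x ∈ (⊥ : IntermediateField k K)) :
    ∃ F : Fin (d + 1) → IntermediateField k K,
      F 0 = ⊤ ∧
      F (Fin.last d) = ⊥ ∧
      (∀ i j : Fin (d + 1), i ≤ j → F j ≤ F i) ∧
      (∀ i : Fin (d + 1), (F i).FG) ∧
      (∀ i : Fin d,
        -- the extension `K_i / K_{i+1}` has transcendence degree 1:
        (∃ t : K, t ∈ F i.castSucc ∧ Transcendental (↥(F i.succ)) t ∧
          ∀ x : K, x ∈ F i.castSucc →
            IsAlgebraic (↥(IntermediateField.adjoin (↥(F i.succ)) ({t} : Set K))) x) ∧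
        -- `K_{i+1}` is relatively algebraically closed in `K_i`:
        (∀ x : K, x ∈ F i.castSucc → IsAlgebraic (↥(F i.succ)) x → x ∈ F i.succ)) := by
  classical
  obtain ⟨b, hb⟩ := htd
  -- the sets of "high" basis vectors and the corresponding fields
  let Sh : Fin (d + 1) → Set K := fun i => b '' {j : Fin d | (i : ℕ) ≤ (j : ℕ)}
  let E : Fin (d + 1) → IntermediateField k K := fun i => IntermediateField.adjoin k (Sh i)
  let Fi : Fin (d + 1) → IntermediateField k K :=
    fun i => IntermediateField.restrictScalars k (algebraicClosure (↥(E i)) K)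
  have hmem : ∀ (i : Fin (d + 1)) (x : K), x ∈ Fi i ↔ IsAlgebraic (↥(E i)) x := by
    intro i x
    exact Iff.trans Iff.rfl (mem_algebraicClosure_iff (F := ↥(E i)) (E := K))
  have hShfin : ∀ i, (Sh i).Finite := fun i => (Set.toFinite _).image b
  have hE_le_F : ∀ i, E i ≤ Fi i := fun i x hx => (hmem i x).mpr (aux_mem_isAlg _ hx)
  have hE_mono : ∀ {i j : Fin (d + 1)}, i ≤ j → E j ≤ E i := by
    intro i j hij
    refine IntermediateField.adjoin_le_iff.mpr ?_
    rintro y ⟨l, hl, rfl⟩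
    exact IntermediateField.subset_adjoin _ _ ⟨l, le_trans (Fin.le_def.mp hij) hl, rfl⟩
  -- F 0 = ⊤
  have hSh0 : Sh 0 = Set.range b := by
    show b '' {j : Fin d | ((0 : Fin (d + 1)) : ℕ) ≤ (j : ℕ)} = Set.range b
    simp only [Fin.val_zero, Nat.zero_le, Set.setOf_true, Set.image_univ]
  have hE0 : E 0 = IntermediateField.adjoin k (Set.range b) := by
    show IntermediateField.adjoin k (Sh 0) = _
    rw [hSh0]
  have hF0 : Fi 0 = ⊤ := by
    refine eq_top_iff.mpr fun x _ => ?_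
    rw [hmem, hE0]
    haveI := hb.isAlgebraic_field
    exact Algebra.IsAlgebraic.isAlgebraic x
  -- F last = ⊥
  have hElast : E (Fin.last d) = ⊥ := by
    have hShl : Sh (Fin.last d) = (∅ : Set K) := by
      show b '' {j : Fin d | ((Fin.last d : Fin (d + 1)) : ℕ) ≤ (j : ℕ)} = ∅
      refine Set.image_eq_empty.mpr ?_
      ext j
      simpa using Nat.not_le.mpr j.isLt
    show IntermediateField.adjoin k (Sh (Fin.last d)) = ⊥
    rw [hShl, IntermediateField.adjoin_empty]
  have hFlast : Fi (Fin.last d) = ⊥ := by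
    refine le_antisymm (fun x hx => ?_) bot_le
    rw [hmem, hElast] at hx
    have halgk : IsAlgebraic k x := by
      refine aux_tr (algebraMap k (↥(⊥ : IntermediateField k K))) (fun a => ?_) (fun y => ?_) hx
      · exact (IsScalarTower.algebraMap_apply k (↥(⊥ : IntermediateField k K)) K a).symm
      · obtain ⟨c, hc⟩ := IntermediateField.mem_bot.mp y.2
        have hy : algebraMap (↥(⊥ : IntermediateField k K)) K y = algebraMap k K c := hc.symm
        rw [hy]
        exact isAlgebraic_algebraMap c
    exact hrac x halgk
  -- monotonicity
  have hmono : ∀ i j : Fin (d + 1), i ≤ j → Fi j ≤ Fi i := by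
    intro i j hij x hx
    rw [hmem] at hx ⊢
    exact aux_map (E j) (E i) (fun y hy => hE_mono hij hy) hx
  -- b i is in E i.castSucc
  have hb_mem : ∀ i : Fin d, b i ∈ E i.castSucc := by
    intro i
    refine IntermediateField.subset_adjoin _ _ ⟨i, ?_, rfl⟩
    simp
  -- b i is transcendental over E i.succ
  have htransE : ∀ i : Fin d, Transcendental (↥(E i.succ)) (b i) := by
    intro i
    set s : Set (Fin d) := {j : Fin d | ((i.succ : Fin (d + 1)) : ℕ) ≤ (j : ℕ)} with hs
    have hins : (i : Fin d) ∉ s := by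
      rw [hs]
      simp [Fin.val_succ]
    have hAIy : AlgebraicIndependent k (fun j : ↥s => b j) :=
      hb.1.comp (Subtype.val : ↥s → Fin d) Subtype.val_injective
    have hAIopt : AlgebraicIndependent k
        (fun o : Option ↥s => o.elim (b i) (fun j : ↥s => b j)) := by
      have hinj : Function.Injective
          (fun o : Option ↥s => Option.elim o (i : Fin d) (Subtype.val : ↥s → Fin d)) := by
        rintro (_ | x) (_ | y) h
        · rfl
        · exact absurd (by rw [show (i : Fin d) = ↑y from h]; exact y.2) hins
        · exact absurd (by rw [← show (↑x : Fin d) = i from h]; exact x.2) hins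
        · exact congrArg some (Subtype.ext h)
      have h3 := hb.1.comp _ hinj
      have heq : (b ∘ fun o : Option ↥s => Option.elim o (i : Fin d) Subtype.val) =
          fun o : Option ↥s => o.elim (b i) (fun j : ↥s => b j) := by
        funext o; cases o <;> rfl
      rwa [heq] at h3
    have htr := (hAIy.option_iff_transcendental (b i)).mp hAIopt
    have hrg : Set.range (fun j : ↥s => b ↑j) = b '' s := by
      rw [show (fun j : ↥s => b ↑j) = b ∘ (Subtype.val : ↥s → Fin d) from rfl,
        Set.range_comp, Subtype.range_coe]
    rw [hrg] at htr
    have hShs : Sh i.succ = b '' s := rfl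
    rw [← hShs] at htr
    exact aux_frac_trans (Sh i.succ) (b i) htr
  -- b i is transcendental over F i.succ
  have htransF : ∀ i : Fin d, Transcendental (↥(Fi i.succ)) (b i) := by
    intro i halg
    exact htransE i (aux_tr' (E i.succ) (Fi i.succ) (fun x hx => hE_le_F _ hx)
      (fun y hy => (hmem _ y).mp hy) halg)
  -- relative algebraic closedness of F i.succ
  have hRAC : ∀ (i : Fin d) (x : K), IsAlgebraic (↥(Fi i.succ)) x → x ∈ Fi i.succ := by
    intro i x halg
    exact (hmem _ x).mpr (aux_tr' (E i.succ) (Fi i.succ) (fun y hy => hE_le_F _ hy)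
      (fun y hy => (hmem _ y).mp hy) halg)
  -- E i.castSucc is contained in any field extension of E i.succ containing b i
  have hEcast_le : ∀ (i : Fin d) (L : IntermediateField k K) (B : IntermediateField (↥L) K),
      b i ∈ B → E i.succ ≤ L → ∀ y ∈ E i.castSucc, y ∈ B := by
    intro i L B hbB hEL
    have hle : E i.castSucc ≤ IntermediateField.restrictScalars k B := by
      refine IntermediateField.adjoin_le_iff.mpr ?_
      rintro y ⟨j, hj, rfl⟩
      rcases eq_or_lt_of_le (show ((i.castSucc : Fin (d + 1)) : ℕ) ≤ (j : ℕ) from hj) with heq | hlt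
      · have hij : (i : Fin d) = j := Fin.ext (by simpa using heq)
        rw [← hij]
        exact hbB
      · have hjE : b j ∈ E i.succ :=
          IntermediateField.subset_adjoin _ _ ⟨j, by simpa [Fin.val_succ] using hlt, rfl⟩
        exact B.algebraMap_mem ⟨b j, hEL hjE⟩
    exact fun y hy => hle hy
  -- finite generation, by induction
  have hFG : ∀ i : Fin (d + 1), (Fi i).FG := by
    intro i
    induction i using Fin.induction with
    | zero => rw [hF0]; exact hfg
    | succ i IH =>
      obtain ⟨sM, hsM⟩ := IH
      set E' : IntermediateField k K := E i.succ with hE'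
      set t : K := b i with htdef
      set P : IntermediateField (↥E') K := IntermediateField.adjoin (↥E') ({t} : Set K) with hP
      have hEP : ∀ y ∈ E i.castSucc, y ∈ P :=
        hEcast_le i E' P (IntermediateField.subset_adjoin _ _ rfl) (le_refl _)
      have hPalg : ∀ x ∈ Fi i.castSucc, IsAlgebraic (↥P) x := fun x hx =>
        aux_map (E i.castSucc) P hEP ((hmem _ x).mp hx)
      set M' : IntermediateField (↥P) K := IntermediateField.adjoin (↥P) (↑sM : Set K) with hM'
      haveI hfdM' : FiniteDimensional (↥P) (↥M') := by
        refine IntermediateField.finiteDimensional_adjoin fun x hx => ?_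
        refine (hPalg x ?_).isIntegral
        rw [← hsM]
        exact IntermediateField.subset_adjoin _ _ hx
      have hMM' : ∀ x ∈ Fi i.castSucc, x ∈ M' := by
        intro x hx
        rw [← hsM] at hx
        have hle : IntermediateField.adjoin k (↑sM : Set K) ≤
            IntermediateField.restrictScalars k
              (IntermediateField.restrictScalars (↥E') M') :=
          IntermediateField.adjoin_le_iff.mpr fun z hz =>
            IntermediateField.subset_adjoin (↥P) (↑sM : Set K) hz
        exact hle hx
      have hE'L : E' ≤ Fi i.succ := hE_le_F _
      set W : IntermediateField (↥E') K := IntermediateField.extendScalars hE'L with hW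
      have hWmem : ∀ x : K, x ∈ W ↔ x ∈ Fi i.succ := fun x =>
        IntermediateField.mem_extendScalars hE'L
      have htW : Transcendental (↥W) t := by
        intro halg
        refine htransE i (aux_tr' (E i.succ) W (fun x hx => (hWmem x).mpr (hE_le_F _ hx))
          (fun y hy => (hmem _ y).mp ((hWmem y).mp hy)) halg)
      set n : ℕ := Module.finrank (↥P) (↥M') with hn
      have hrank : Module.rank (↥E') (↥W) ≤ n := by
        refine rank_le fun sfin hli => ?_
        have hu : LinearIndependent (↥E') (fun m : sfin => ((m : ↥W) : K)) := by
          have h4 := hli.map' W.val.toLinearMap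
            (LinearMap.ker_eq_bot.mpr Subtype.val_injective)
          exact h4
        have hu1 := aux_step1 t W htW _ (fun m : sfin => (m : ↥W).2) hu
        have hu2 := aux_frac_li (F := ↥E') ({t} : Set K) _ hu1
        have humem : ∀ m : sfin, ((m : ↥W) : K) ∈ M' := fun m =>
          hMM' _ (hmono i.castSucc i.succ (le_of_lt (Fin.castSucc_lt_succ (i := i)))
            ((hWmem _).mp (m : ↥W).2))
        have hw : LinearIndependent (↥P)
            (fun m : sfin => (⟨((m : ↥W) : K), humem m⟩ : ↥M')) := by
          refine LinearIndependent.of_comp M'.val.toLinearMap ?_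
          exact hu2
        have hcard := hw.fintype_card_le_finrank
        simpa [Fintype.card_coe] using hcard
      haveI hfdW : FiniteDimensional (↥E') (↥W) :=
        Module.rank_lt_aleph0_iff.mp (lt_of_le_of_lt hrank (Cardinal.nat_lt_aleph0 n))
      haveI : IsNoetherian (↥E') (↥W) := IsNoetherian.iff_fg.mpr hfdW
      obtain ⟨tW, htW'⟩ := IntermediateField.fg_of_noetherian (⊤ : IntermediateField (↥E') (↥W))
      -- the generating finset for Fi i.succ over k
      set gens : Finset K :=
        (hShfin i.succ).toFinset ∪ tW.image (fun y : ↥W => (y : K)) with hgens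
      refine ⟨gens, ?_⟩
      have hgle : IntermediateField.adjoin k (↑gens : Set K) ≤ Fi i.succ := by
        refine IntermediateField.adjoin_le_iff.mpr fun z hz => ?_
        rw [hgens] at hz
        simp only [Finset.coe_union, Set.mem_union, Finset.coe_image, Set.Finite.coe_toFinset,
          Set.mem_image, Finset.mem_coe] at hz
        rcases hz with hz | ⟨y, _, rfl⟩
        · exact hE_le_F i.succ (IntermediateField.subset_adjoin _ _ hz)
        · exact (hWmem _).mp y.2
      refine le_antisymm hgle fun x hx => ?_
      -- reverse inclusion
      set N : IntermediateField k K := IntermediateField.adjoin k (↑gens : Set K) with hN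
      have hE'N : E' ≤ N := by
        refine IntermediateField.adjoin_le_iff.mpr fun z hz => ?_
        refine IntermediateField.subset_adjoin _ _ ?_
        rw [hgens]
        simp only [Finset.coe_union, Set.mem_union, Set.Finite.coe_toFinset]
        left
        refine Set.image_mono (fun l hl => ?_) hz
        simp only [Set.mem_setOf_eq] at hl ⊢
        omega
      set NE : IntermediateField (↥E') K := IntermediateField.extendScalars hE'N with hNE
      have hxW : x ∈ W := (hWmem x).mpr hx
      have hxtop : (⟨x, hxW⟩ : ↥W) ∈ (⊤ : IntermediateField (↥E') (↥W)) := trivial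
      rw [← htW'] at hxtop
      have hcmp : IntermediateField.adjoin (↥E') (↑tW : Set ↥W) ≤
          IntermediateField.comap W.val NE := by
        refine IntermediateField.adjoin_le_iff.mpr fun y hy => ?_
        show W.val y ∈ NE
        rw [IntermediateField.mem_extendScalars]
        refine IntermediateField.subset_adjoin _ _ ?_
        rw [hgens]
        simp only [Finset.coe_union, Set.mem_union, Finset.coe_image, Set.mem_image,
          Finset.mem_coe]
        right
        exact ⟨y, hy, rfl⟩
      have hxN := hcmp hxtop
      have hxN' : W.val ⟨x, hxW⟩ ∈ NE := hxN
      rw [IntermediateField.mem_extendScalars] at hxN'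
      exact hxN'
  -- assemble
  refine ⟨Fi, hF0, hFlast, hmono, hFG, fun i => ⟨⟨b i, ?_, htransF i, ?_⟩, ?_⟩⟩
  · exact hE_le_F _ (hb_mem i)
  · intro x hx
    refine aux_map (E i.castSucc)
      (IntermediateField.adjoin (↥(Fi i.succ)) ({b i} : Set K)) ?_ ((hmem _ x).mp hx)
    exact hEcast_le i (Fi i.succ) _ (IntermediateField.subset_adjoin _ _ rfl) (hE_le_F _)
  · exact fun x _ halg => hRAC i x halg
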